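/- Fix constants a, b ∈ ℝ and c, d > 0, and let τ̄₁, τ₂ : ℝ × ℝ⁴ → ℝ be continuous feedback laws depending on (t, z, ψ, ū, r). Suppose the closed-loop subsystem ż = −ū r, ψ̇ = r, ū̇ = τ̄₁(t, z, ψ, ū, r), ṙ = τ₂(t, z, ψ, ū, r) is GUAS, i.e., there exists a class-κℓ function χ₁ such that for every t₀ ∈ ℝ every solution on [t₀,∞) satisfies ‖(z(t), ψ(t), ū(t), r(t))‖ ≤ χ₁(‖(z(t₀), ψ(t₀), ū(t₀), r(t₀))‖, t − t₀) for all t ≥ t₀. Then the full stabilization system on ℝ⁶ in the state (x̄, v̄, z, ψ, ū, r), given by x̄̇ = (ū − d x̄)/c + (z − v̄) r/d, v̄̇ = −(ū − d x̄) r − d(v̄ − a r − b ψ), ż = −ū r, ψ̇ = r, ū̇ = τ̄₁(t, z, ψ, ū, r), ṙ = τ₂(t, z, ψ, ū, r), is also GUAS: there exists a class-κℓ function χ such that for every t₀ ∈ ℝ every solution on [t₀,∞) satisfies ‖(x̄(t), v̄(t), z(t), ψ(t), ū(t), r(t))‖ ≤ χ(‖(x̄(t₀), v̄(t₀), z(t₀),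 ψ(t₀), ū(t₀), r(t₀))‖, t − t₀) for all t ≥ t₀. -/

import Mathlib

open Real Filter

/-- Euclidean norm on ℝ⁴. -/
noncomputable def norm4 (a b c d : ℝ) : ℝ := Real.sqrt (a ^ 2 + b ^ 2 + c ^ 2 + d ^ 2)

/-- Euclidean norm on ℝ⁶. -/
noncomputable def norm6 (a b c d e f : ℝ) : ℝ :=
  Real.sqrt (a ^ 2 + b ^ 2 + c ^ 2 + d ^ 2 + e ^ 2 + f ^ 2)

/-- A class-κ function: continuous, strictly increasing on [0,∞), vanishing at 0. -/
def IsClassK (ρ : ℝ → ℝ) : Prop :=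
  ContinuousOn ρ (Set.Ici 0) ∧ StrictMonoOn ρ (Set.Ici 0) ∧ ρ 0 = 0

/-- A class-κℓ function. -/
def IsClassKL (χ : ℝ → ℝ → ℝ) : Prop :=
  (∀ s, 0 ≤ s → IsClassK fun r => χ r s) ∧
  (∀ r, 0 ≤ r → AntitoneOn (fun s => χ r s) (Set.Ici 0)) ∧
  (∀ r, 0 ≤ r → Tendsto (fun s => χ r s) atTop (nhds 0))

/-! ### Auxiliary lemmas -/

lemma young {K : ℝ} (hK : 0 < K) (p q : ℝ) : 2*p*q ≤ K*p^2 + q^2/K := by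
  rw [show K*p^2 + q^2/K = (K^2*p^2 + q^2)/K by field_simp, le_div_iff₀ hK]
  nlinarith [sq_nonneg (K*p - q)]

lemma sqrt_add_le' {A B : ℝ} (hA : 0 ≤ A) (hB : 0 ≤ B) :
    Real.sqrt (A+B) ≤ Real.sqrt A + Real.sqrt B := by
  have h : A + B ≤ (Real.sqrt A + Real.sqrt B)^2 := by
    nlinarith [Real.sq_sqrt hA, Real.sq_sqrt hB, Real.sqrt_nonneg A, Real.sqrt_nonneg B,
      mul_nonneg (Real.sqrt_nonneg A) (Real.sqrt_nonneg B)]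
  calc Real.sqrt (A+B) ≤ Real.sqrt ((Real.sqrt A + Real.sqrt B)^2) := Real.sqrt_le_sqrt h
    _ = Real.sqrt A + Real.sqrt B := Real.sqrt_sq (by positivity)

lemma classK_mono {ρ : ℝ → ℝ} (hm : StrictMonoOn ρ (Set.Ici 0)) {x y : ℝ}
    (hx : 0 ≤ x) (hxy : x ≤ y) : ρ x ≤ ρ y :=
  hm.monotoneOn (Set.mem_Ici.2 hx) (Set.mem_Ici.2 (hx.trans hxy)) hxy

lemma classK_nonneg {ρ : ℝ → ℝ} (hm : StrictMonoOn ρ (Set.Ici 0)) (h0 : ρ 0 = 0)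
    {x : ℝ} (hx : 0 ≤ x) : 0 ≤ ρ x := h0 ▸ classK_mono hm le_rfl hx

/-- Exponential comparison lemma. -/
lemma expComp {V Vd : ℝ → ℝ} {K eps t₁ t₂ : ℝ} (hK : 0 < K) (heps : 0 ≤ eps)
    (hderiv : ∀ s ∈ Set.Icc t₁ t₂, HasDerivAt V (Vd s) s)
    (hle : ∀ s ∈ Set.Icc t₁ t₂, Vd s ≤ -K * V s + eps)
    (ht : t₁ ≤ t₂) : V t₂ ≤ V t₁ * Real.exp (-K * (t₂ - t₁)) + eps / K := by
  set g : ℝ → ℝ := fun s => (V s - eps/K) * Real.exp (K*s) with hg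
  have hgd : ∀ s ∈ Set.Icc t₁ t₂,
      HasDerivAt g ((Vd s + K * V s - eps) * Real.exp (K*s)) s := by
    intro s hs
    have h1 : HasDerivAt (fun s => V s - eps/K) (Vd s) s := (hderiv s hs).sub_const _
    have h2 : HasDerivAt (fun s => Real.exp (K*s)) (K * Real.exp (K*s)) s := by
      have := (Real.hasDerivAt_exp (K*s)).comp s ((hasDerivAt_id s).const_mul K)
      simpa [mul_comm, Function.comp_def] using this
    have := h1.fun_mul h2
    refine this.congr_deriv ?_
    field_simp
    ring
  have hmono : AntitoneOn g (Set.Icc t₁ t₂) := by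
    apply antitoneOn_of_deriv_nonpos (convex_Icc t₁ t₂)
    · exact fun s hs => ((hgd s hs).differentiableAt).continuousAt.continuousWithinAt
    · intro s hs
      rw [interior_Icc] at hs
      exact ((hgd s (Set.mem_Icc_of_Ioo hs)).differentiableAt).differentiableWithinAt
    · intro s hs
      rw [interior_Icc] at hs
      rw [(hgd s (Set.mem_Icc_of_Ioo hs)).deriv]
      have := hle s (Set.mem_Icc_of_Ioo hs)
      have hepos := Real.exp_nonneg (K*s)
      nlinarith
  have hgle : g t₂ ≤ g t₁ := hmono (Set.left_mem_Icc.2 ht) (Set.right_mem_Icc.2 ht) ht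
  rw [hg] at hgle
  simp only at hgle
  have hE1 : Real.exp (K*t₁) ≤ Real.exp (K*t₂) := by
    apply Real.exp_le_exp.2; nlinarith
  have e2pos : 0 < Real.exp (K*t₂) := Real.exp_pos _
  have key : V t₂ - eps/K ≤ (V t₁ - eps/K) * Real.exp (-K * (t₂ - t₁)) := by
    rw [show (-K * (t₂ - t₁)) = K*t₁ - K*t₂ by ring, Real.exp_sub, ← mul_div_assoc]
    rw [le_div_iff₀ e2pos]
    linarith [hgle]
  have hE : Real.exp (-K * (t₂ - t₁)) ≤ 1 := by
    apply Real.exp_le_one_iff.2; nlinarith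
  have hEpos : 0 < Real.exp (-K * (t₂ - t₁)) := Real.exp_pos _
  have hek : 0 ≤ eps / K := by positivity
  nlinarith

lemma sq_le_of_abs_le {x W : ℝ} (h : |x| ≤ W) : x^2 ≤ W^2 := by
  nlinarith [abs_nonneg x, sq_abs x]

set_option maxHeartbeats 1000000 in
lemma Vd_bound {a b c d K X Y Z Ψ U Rr W : ℝ} (hc : 0 < c) (hd : 0 < d)
    (hK : 0 < K) (hK1 : 2*K ≤ d/c) (hK2 : 2*K ≤ d)
    (hZ : |Z| ≤ W) (hΨ : |Ψ| ≤ W) (hU : |U| ≤ W) (hR : |Rr| ≤ W) (hW : 0 ≤ W) :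
    2*d^2*X*((U - d*X)/c + (Z - Y)*Rr/d) + 2*Y*(-(U - d*X)*Rr - d*(Y - a*Rr - b*Ψ))
      ≤ -K*(d^2*X^2 + Y^2) + (1/K)*((d/c)^2 + d^2*a^2 + d^2*b^2 + 2)*(W^2+W^4) := by
  have hL : 2*d^2*X*((U - d*X)/c + (Z - Y)*Rr/d) + 2*Y*(-(U - d*X)*Rr - d*(Y - a*Rr - b*Ψ))
      = -(2*(d^3/c)*X^2) - 2*d*Y^2 + 2*(d*X)*(d*U/c) + 2*(d*X)*(Z*Rr)
        + 2*Y*(-(U*Rr)) + 2*Y*(d*a*Rr) + 2*Y*(d*b*Ψ) := by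
    field_simp
    ring
  rw [hL]
  have hZ2 : Z^2 ≤ W^2 := sq_le_of_abs_le hZ
  have hΨ2 : Ψ^2 ≤ W^2 := sq_le_of_abs_le hΨ
  have hU2 : U^2 ≤ W^2 := sq_le_of_abs_le hU
  have hR2 : Rr^2 ≤ W^2 := sq_le_of_abs_le hR
  have h1 := young hK (d*X) (d*U/c)
  have h2 := young hK (d*X) (Z*Rr)
  have h3 := young hK Y (-(U*Rr))
  have h4 := young hK Y (d*a*Rr)
  have h5 := young hK Y (d*b*Ψ)
  have hq1 : (d*U/c)^2/K ≤ ((d/c)^2*W^2)/K := by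
    refine (div_le_div_iff_of_pos_right hK).2 ?_
    calc (d*U/c)^2 = (d/c)^2*U^2 := by ring
    _ ≤ (d/c)^2*W^2 := by nlinarith [sq_nonneg (d/c)]
  have sqsq : ∀ p q : ℝ, p^2 ≤ W^2 → q^2 ≤ W^2 → (p*q)^2 ≤ W^4 := by
    intro p q hp hq
    calc (p*q)^2 = p^2*q^2 := by ring
    _ ≤ W^2*q^2 := mul_le_mul_of_nonneg_right hp (sq_nonneg q)
    _ ≤ W^2*W^2 := mul_le_mul_of_nonneg_left hq (sq_nonneg W)
    _ = W^4 := by ring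
  have hq2 : (Z*Rr)^2/K ≤ W^4/K := by
    refine (div_le_div_iff_of_pos_right hK).2 ?_
    exact sqsq Z Rr hZ2 hR2
  have hq3 : (-(U*Rr))^2/K ≤ W^4/K := by
    refine (div_le_div_iff_of_pos_right hK).2 ?_
    calc (-(U*Rr))^2 = (U*Rr)^2 := by ring
    _ ≤ W^4 := sqsq U Rr hU2 hR2
  have hq4 : (d*a*Rr)^2/K ≤ (d^2*a^2*W^2)/K := by
    refine (div_le_div_iff_of_pos_right hK).2 ?_
    calc (d*a*Rr)^2 = d^2*a^2*Rr^2 := by ring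
    _ ≤ d^2*a^2*W^2 := by nlinarith [sq_nonneg (d*a)]
  have hq5 : (d*b*Ψ)^2/K ≤ (d^2*b^2*W^2)/K := by
    refine (div_le_div_iff_of_pos_right hK).2 ?_
    calc (d*b*Ψ)^2 = d^2*b^2*Ψ^2 := by ring
    _ ≤ d^2*b^2*W^2 := by nlinarith [sq_nonneg (d*b)]
  have hdamp1 : 4*K*(d^2*X^2) ≤ 2*(d^3/c)*X^2 := by
    have h := mul_le_mul_of_nonneg_right hK1 (sq_nonneg X)
    have h2 := mul_le_mul_of_nonneg_left h (by positivity : (0:ℝ) ≤ 2*d^2)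
    calc 4*K*(d^2*X^2) = 2*d^2*(2*K*X^2) := by ring
    _ ≤ 2*d^2*(d/c*X^2) := h2
    _ = 2*(d^3/c)*X^2 := by ring
  have hdamp2 : 4*K*Y^2 ≤ 2*d*Y^2 := by nlinarith [sq_nonneg Y]
  have hx2 : 0 ≤ K*(d^2*X^2) := by positivity
  have hs1 : 0 ≤ W^2/K := by positivity
  have hs2 : 0 ≤ W^4/K := by positivity
  have hs3 : 0 ≤ ((d/c)^2*W^4)/K := by positivity
  have hs4 : 0 ≤ (d^2*a^2*W^4)/K := by positivity
  have hs5 : 0 ≤ (d^2*b^2*W^4)/K := by positivity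
  have hexp : (1/K)*((d/c)^2 + d^2*a^2 + d^2*b^2 + 2)*(W^2+W^4)
      = ((d/c)^2*W^2)/K + (d^2*a^2*W^2)/K + (d^2*b^2*W^2)/K + 2*(W^4/K) + 2*(W^2/K)
        + ((d/c)^2*W^4)/K + (d^2*a^2*W^4)/K + (d^2*b^2*W^4)/K := by
    field_simp
    ring
  rw [hexp]
  have e1 : K*(d*X)^2 = K*(d^2*X^2) := by ring
  rw [e1] at h1 h2
  linarith [h1, h2, h3, h4, h5, hq1, hq2, hq3, hq4, hq5]

lemma abs_le_of_sq_le {x y : ℝ} (h : x^2 ≤ y) : |x| ≤ Real.sqrt y := by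
  rw [← Real.sqrt_sq_eq_abs]; exact Real.sqrt_le_sqrt h

lemma abs_le_norm4₁ (a b c d : ℝ) : |a| ≤ norm4 a b c d :=
  abs_le_of_sq_le (by nlinarith [sq_nonneg b, sq_nonneg c, sq_nonneg d])
lemma abs_le_norm4₂ (a b c d : ℝ) : |b| ≤ norm4 a b c d :=
  abs_le_of_sq_le (by nlinarith [sq_nonneg a, sq_nonneg c, sq_nonneg d])
lemma abs_le_norm4₃ (a b c d : ℝ) : |c| ≤ norm4 a b c d :=
  abs_le_of_sq_le (by nlinarith [sq_nonneg a, sq_nonneg b, sq_nonneg d])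
lemma abs_le_norm4₄ (a b c d : ℝ) : |d| ≤ norm4 a b c d :=
  abs_le_of_sq_le (by nlinarith [sq_nonneg a, sq_nonneg b, sq_nonneg c])

lemma norm4_le_norm6 (a b c d e f : ℝ) : norm4 c d e f ≤ norm6 a b c d e f :=
  Real.sqrt_le_sqrt (by nlinarith [sq_nonneg a, sq_nonneg b])

lemma norm6_split (a b c d e f : ℝ) :
    norm6 a b c d e f ≤ Real.sqrt (a^2 + b^2) + norm4 c d e f := by
  have h : norm6 a b c d e f = Real.sqrt ((a^2+b^2) + (c^2+d^2+e^2+f^2)) := by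
    unfold norm6; congr 1; ring
  rw [h]
  exact sqrt_add_le' (by positivity) (by positivity)

lemma sqrt_exp_eq (x : ℝ) : Real.sqrt (Real.exp x) = Real.exp (x/2) := by
  rw [show Real.exp x = (Real.exp (x/2))^2 by rw [pow_two, ← Real.exp_add]; ring_nf]
  exact Real.sqrt_sq (Real.exp_nonneg _)

lemma max_sq_bound {d R X Y : ℝ} (hd : 0 < d) (hXY : X^2 + Y^2 ≤ R^2) :
    d^2*X^2 + Y^2 ≤ (max d 1 * R)^2 := by
  have hm1 : d ≤ max d 1 := le_max_left d 1
  have hm2 : (1:ℝ) ≤ max d 1 := le_max_right d 1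
  have h1 : d^2 ≤ (max d 1)^2 := by nlinarith
  have h2 : (1:ℝ) ≤ (max d 1)^2 := by nlinarith
  linarith only [mul_le_mul_of_nonneg_right h1 (sq_nonneg X),
    mul_le_mul_of_nonneg_right h2 (sq_nonneg Y),
    mul_le_mul_of_nonneg_left hXY (sq_nonneg (max d 1))]

lemma min_sq_bound {d X Y : ℝ} (hd : 0 < d) :
    (min d 1)^2*(X^2+Y^2) ≤ d^2*X^2 + Y^2 := by
  have hm1 : min d 1 ≤ d := min_le_left d 1
  have hm2 : min d 1 ≤ 1 := min_le_right d 1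
  have hm0 : 0 ≤ min d 1 := le_min hd.le zero_le_one
  have h1 : (min d 1)^2 ≤ d^2 := by nlinarith
  have h2 : (min d 1)^2 ≤ 1 := by nlinarith
  linarith only [mul_le_mul_of_nonneg_right h1 (sq_nonneg X),
    mul_le_mul_of_nonneg_right h2 (sq_nonneg Y)]

lemma chi_isKL {χ₁ : ℝ → ℝ → ℝ} (h : IsClassKL χ₁) {K A B : ℝ}
    (hK : 0 < K) (hA : 0 < A) (hB : 0 ≤ B) :
    IsClassKL (fun ρ s => χ₁ ρ s + (A*ρ + B*(χ₁ ρ 0 + (χ₁ ρ 0)^2)) * Real.exp (-(K/4)*s)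
      + B*(χ₁ ρ (s/2) + (χ₁ ρ (s/2))^2)) := by
  obtain ⟨hKcl, hAnti, hTend⟩ := h
  have hnn : ∀ σ ρ : ℝ, 0 ≤ σ → 0 ≤ ρ → 0 ≤ χ₁ ρ σ := fun σ ρ hσ hρ =>
    classK_nonneg (hKcl σ hσ).2.1 (hKcl σ hσ).2.2 hρ
  refine ⟨fun s hs => ?_, fun ρ hρ => ?_, fun ρ hρ => ?_⟩
  · have h0 := hKcl 0 le_rfl
    have hs2 := hKcl (s/2) (by linarith)
    have hs' := hKcl s hs
    refine ⟨?_, ?_, ?_⟩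
    · apply ContinuousOn.add
      apply ContinuousOn.add
      · exact hs'.1
      · exact (((continuousOn_const.mul continuousOn_id).add
          (continuousOn_const.mul (h0.1.add (h0.1.pow 2)))).mul continuousOn_const)
      · exact continuousOn_const.mul (hs2.1.add (hs2.1.pow 2))
    · intro x hx y hy hxy
      simp only []
      have hx0 : (0:ℝ) ≤ x := hx
      have hy0 : (0:ℝ) ≤ y := hy
      have m1 : χ₁ x s < χ₁ y s := hs'.2.1 hx hy hxy
      have m0 : χ₁ x 0 ≤ χ₁ y 0 := classK_mono h0.2.1 hx0 hxy.le
      have m2 : χ₁ x (s/2) ≤ χ₁ y (s/2) := classK_mono hs2.2.1 hx0 hxy.le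
      have n0 : 0 ≤ χ₁ x 0 := hnn 0 x le_rfl hx0
      have n2 : 0 ≤ χ₁ x (s/2) := hnn (s/2) x (by linarith) hx0
      have e1 : A*x + B*(χ₁ x 0 + (χ₁ x 0)^2) ≤ A*y + B*(χ₁ y 0 + (χ₁ y 0)^2) := by
        have h' : χ₁ x 0 + (χ₁ x 0)^2 ≤ χ₁ y 0 + (χ₁ y 0)^2 := by nlinarith
        have := mul_le_mul_of_nonneg_left h' hB
        nlinarith
      have t2 := mul_le_mul_of_nonneg_right e1 (Real.exp_nonneg (-(K/4)*s))
      have t3 : B*(χ₁ x (s/2) + (χ₁ x (s/2))^2) ≤ B*(χ₁ y (s/2) + (χ₁ y (s/2))^2) := by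
        apply mul_le_mul_of_nonneg_left ?_ hB
        nlinarith
      linarith
    · simp only [(hKcl s hs).2.2, h0.2.2, hs2.2.2]
      ring
  · intro s₁ hs₁ s₂ hs₂ h12
    simp only []
    have hs₁0 : (0:ℝ) ≤ s₁ := hs₁
    have hs₂0 : (0:ℝ) ≤ s₂ := hs₂
    have t1 : χ₁ ρ s₂ ≤ χ₁ ρ s₁ := hAnti ρ hρ hs₁ hs₂ h12
    have hC : 0 ≤ A*ρ + B*(χ₁ ρ 0 + (χ₁ ρ 0)^2) := by
      have := hnn 0 ρ le_rfl hρ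
      nlinarith
    have hexp : Real.exp (-(K/4)*s₂) ≤ Real.exp (-(K/4)*s₁) := by
      apply Real.exp_le_exp.2; nlinarith
    have t2 := mul_le_mul_of_nonneg_left hexp hC
    have t3 : χ₁ ρ (s₂/2) ≤ χ₁ ρ (s₁/2) :=
      hAnti ρ hρ (Set.mem_Ici.2 (by linarith)) (Set.mem_Ici.2 (by linarith)) (by linarith)
    have n2 : 0 ≤ χ₁ ρ (s₂/2) := hnn (s₂/2) ρ (by linarith) hρ
    have t4 : B*(χ₁ ρ (s₂/2) + (χ₁ ρ (s₂/2))^2) ≤ B*(χ₁ ρ (s₁/2) + (χ₁ ρ (s₁/2))^2) := by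
      apply mul_le_mul_of_nonneg_left ?_ hB
      nlinarith
    linarith
  · have T1 := hTend ρ hρ
    have hbot : Tendsto (fun s : ℝ => -(K/4)*s) atTop atBot :=
      (tendsto_const_mul_atBot_of_neg (by linarith : -(K/4) < 0)).2 tendsto_id
    have T2 : Tendsto (fun s : ℝ => (A*ρ + B*(χ₁ ρ 0 + (χ₁ ρ 0)^2)) * Real.exp (-(K/4)*s))
        atTop (nhds 0) := by
      have he : Tendsto (fun s : ℝ => Real.exp (-(K/4)*s)) atTop (nhds 0) :=
        Real.tendsto_exp_atBot.comp hbot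
      simpa using he.const_mul (A*ρ + B*(χ₁ ρ 0 + (χ₁ ρ 0)^2))
    have Thalf : Tendsto (fun s : ℝ => χ₁ ρ (s/2)) atTop (nhds 0) :=
      T1.comp (tendsto_id.atTop_div_const two_pos)
    have T3 : Tendsto (fun s : ℝ => B*(χ₁ ρ (s/2) + (χ₁ ρ (s/2))^2)) atTop (nhds 0) := by
      have := (Thalf.add (Thalf.pow 2)).const_mul B
      simpa using this
    have := (T1.add T2).add T3
    simpa using this

set_option maxHeartbeats 4000000 in
/-- Cascade lemma for point stabilization: if the (z, ψ, ū, r)-subsystem is GUAS under the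
feedback laws (τ̄₁, τ₂), then the full stabilization system including (x̄, v̄) is GUAS. -/
theorem stmt1 (a b c d : ℝ) (hc : 0 < c) (hd : 0 < d)
    (τ₁ τ₂ : ℝ → ℝ → ℝ → ℝ → ℝ → ℝ)
    (hτ₁cont : Continuous fun p : ℝ × ℝ × ℝ × ℝ × ℝ =>
      τ₁ p.1 p.2.1 p.2.2.1 p.2.2.2.1 p.2.2.2.2)
    (hτ₂cont : Continuous fun p : ℝ × ℝ × ℝ × ℝ × ℝ =>
      τ₂ p.1 p.2.1 p.2.2.1 p.2.2.2.1 p.2.2.2.2)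
    (hGUAS : ∃ χ₁ : ℝ → ℝ → ℝ, IsClassKL χ₁ ∧
      ∀ t₀ : ℝ, ∀ z ψ u r : ℝ → ℝ,
        (∀ t, t₀ ≤ t →
          HasDerivAt z (-(u t * r t)) t ∧
          HasDerivAt ψ (r t) t ∧
          HasDerivAt u (τ₁ t (z t) (ψ t) (u t) (r t)) t ∧
          HasDerivAt r (τ₂ t (z t) (ψ t) (u t) (r t)) t) →
        ∀ t, t₀ ≤ t →
          norm4 (z t) (ψ t) (u t) (r t) ≤
            χ₁ (norm4 (z t₀) (ψ t₀) (u t₀) (r t₀)) (t - t₀)) :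
    ∃ χ : ℝ → ℝ → ℝ, IsClassKL χ ∧
      ∀ t₀ : ℝ, ∀ xb vb z ψ u r : ℝ → ℝ,
        (∀ t, t₀ ≤ t →
          HasDerivAt xb ((u t - d * xb t) / c + (z t - vb t) * r t / d) t ∧
          HasDerivAt vb (-(u t - d * xb t) * r t - d * (vb t - a * r t - b * ψ t)) t ∧
          HasDerivAt z (-(u t * r t)) t ∧
          HasDerivAt ψ (r t) t ∧
          HasDerivAt u (τ₁ t (z t) (ψ t) (u t) (r t)) t ∧
          HasDerivAt r (τ₂ t (z t) (ψ t) (u t) (r t)) t) →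
        ∀ t, t₀ ≤ t →
          norm6 (xb t) (vb t) (z t) (ψ t) (u t) (r t) ≤
            χ (norm6 (xb t₀) (vb t₀) (z t₀) (ψ t₀) (u t₀) (r t₀)) (t - t₀) := by
  obtain ⟨χ₁, hKL, hbound⟩ := hGUAS
  obtain ⟨hKcl, hAnti, hTend⟩ := hKL
  set K : ℝ := min (d/c) d / 2 with hKdef
  have hKpos : 0 < K := by
    have h1 : 0 < min (d/c) d := lt_min (div_pos hd hc) hd
    rw [hKdef]; linarith
  have hK1 : 2*K ≤ d/c := by rw [hKdef]; have := min_le_left (d/c) d; linarith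
  have hK2 : 2*K ≤ d := by rw [hKdef]; have := min_le_right (d/c) d; linarith
  set ccoef : ℝ := (1/K)*((d/c)^2 + d^2*a^2 + d^2*b^2 + 2) with hccoefdef
  have hccoef : 0 < ccoef := by
    rw [hccoefdef]
    apply mul_pos (by positivity) (by positivity)
  set m : ℝ := min d 1 with hmdef
  have hm : 0 < m := lt_min hd one_pos
  set A : ℝ := max d 1 / m with hAdef
  have hA : 0 < A := div_pos (lt_max_of_lt_right one_pos) hm
  set S : ℝ := Real.sqrt (ccoef / K) with hSdef
  set B : ℝ := S / m with hBdef
  have hB : 0 ≤ B := div_nonneg (hSdef ▸ Real.sqrt_nonneg _) hm.le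
  refine ⟨fun ρ s => χ₁ ρ s + (A*ρ + B*(χ₁ ρ 0 + (χ₁ ρ 0)^2)) * Real.exp (-(K/4)*s)
      + B*(χ₁ ρ (s/2) + (χ₁ ρ (s/2))^2), chi_isKL ⟨hKcl, hAnti, hTend⟩ hKpos hA hB, ?_⟩
  intro t₀ xb vb z ψ u r hsol t ht
  simp only []
  set R : ℝ := norm6 (xb t₀) (vb t₀) (z t₀) (ψ t₀) (u t₀) (r t₀) with hRdef
  have hR0 : 0 ≤ R := hRdef ▸ Real.sqrt_nonneg _
  have hw : ∀ s, t₀ ≤ s → norm4 (z s) (ψ s) (u s) (r s) ≤ χ₁ R (s - t₀) := by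
    intro s hs
    have h1 := hbound t₀ z ψ u r (fun τ hτ => ⟨(hsol τ hτ).2.2.1, (hsol τ hτ).2.2.2.1,
      (hsol τ hτ).2.2.2.2.1, (hsol τ hτ).2.2.2.2.2⟩) s hs
    refine h1.trans (classK_mono (hKcl (s - t₀) (by linarith)).2.1 (Real.sqrt_nonneg _) ?_)
    rw [hRdef]
    exact norm4_le_norm6 _ _ _ _ _ _
  have hwnn : ∀ σ : ℝ, 0 ≤ σ → 0 ≤ χ₁ R σ := fun σ hσ =>
    classK_nonneg (hKcl σ hσ).2.1 (hKcl σ hσ).2.2 hR0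
  set V : ℝ → ℝ := fun s => d^2*(xb s)^2 + (vb s)^2 with hVdef
  set Vd : ℝ → ℝ := fun s => 2*d^2*(xb s)*((u s - d*(xb s))/c + (z s - vb s)*(r s)/d)
      + 2*(vb s)*(-(u s - d*(xb s))*(r s) - d*(vb s - a*(r s) - b*(ψ s))) with hVddef
  have hVderiv : ∀ s, t₀ ≤ s → HasDerivAt V (Vd s) s := by
    intro s hs
    obtain ⟨hx, hv, -, -, -, -⟩ := hsol s hs
    have h1 := ((hx.pow 2).const_mul (d^2)).add (hv.pow 2)
    rw [hVdef, hVddef]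
    refine h1.congr_deriv ?_
    push_cast
    ring
  have hVle : ∀ (W t₁ t₂ : ℝ), 0 ≤ W →
      (∀ s ∈ Set.Icc t₁ t₂, norm4 (z s) (ψ s) (u s) (r s) ≤ W) →
      ∀ s ∈ Set.Icc t₁ t₂, Vd s ≤ -K * V s + ccoef*(W^2+W^4) := by
    intro W t₁ t₂ hW hWb s hs
    have hn := hWb s hs
    have hz := (abs_le_norm4₁ _ _ _ _).trans hn
    have hψ := (abs_le_norm4₂ _ _ _ _).trans hn
    have hu := (abs_le_norm4₃ _ _ _ _).trans hn
    have hr := (abs_le_norm4₄ _ _ _ _).trans hn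
    rw [hVddef, hVdef, hccoefdef]
    exact Vd_bound hc hd hKpos hK1 hK2 hz hψ hu hr hW
  set mid : ℝ := (t₀ + t)/2 with hmid
  have h1 : t₀ ≤ mid := by rw [hmid]; linarith
  have h2 : mid ≤ t := by rw [hmid]; linarith
  set W₀ : ℝ := χ₁ R 0 with hW₀
  set W₁ : ℝ := χ₁ R ((t - t₀)/2) with hW₁
  have hW₀nn : 0 ≤ W₀ := hW₀ ▸ hwnn 0 le_rfl
  have hW₁nn : 0 ≤ W₁ := hW₁ ▸ hwnn _ (by linarith)
  have heps₀ : 0 ≤ ccoef*(W₀^2+W₀^4) := mul_nonneg hccoef.le (by positivity)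
  have heps₁ : 0 ≤ ccoef*(W₁^2+W₁^4) := mul_nonneg hccoef.le (by positivity)
  have hb0 : ∀ s ∈ Set.Icc t₀ mid, norm4 (z s) (ψ s) (u s) (r s) ≤ W₀ := by
    intro s hs
    refine (hw s hs.1).trans ?_
    rw [hW₀]
    exact hAnti R hR0 (Set.mem_Ici.2 le_rfl) (Set.mem_Ici.2 (by linarith [hs.1]))
      (by linarith [hs.1])
  have comp1 := expComp hKpos heps₀ (fun s hs => hVderiv s hs.1)
      (hVle W₀ t₀ mid hW₀nn hb0) h1
  have hb1 : ∀ s ∈ Set.Icc mid t, norm4 (z s) (ψ s) (u s) (r s) ≤ W₁ := by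
    intro s hs
    have hs1 : t₀ ≤ s := le_trans h1 hs.1
    refine (hw s hs1).trans ?_
    rw [hW₁]
    have hge : (t - t₀)/2 ≤ s - t₀ := by
      have := hs.1
      rw [hmid] at this
      linarith
    exact hAnti R hR0 (Set.mem_Ici.2 (by linarith)) (Set.mem_Ici.2 (by linarith)) hge
  have comp2 := expComp hKpos heps₁ (fun s hs => hVderiv s (le_trans h1 hs.1))
      (hVle W₁ mid t hW₁nn hb1) h2
  have hVt₀nn : 0 ≤ V t₀ := by rw [hVdef]; positivity
  have hVmid : V mid ≤ V t₀ + ccoef*(W₀^2+W₀^4)/K := by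
    have hE0le : Real.exp (-K*(mid - t₀)) ≤ 1 :=
      Real.exp_le_one_iff.2 (by linarith only [mul_nonneg hKpos.le (sub_nonneg.2 h1)])
    have hmul := mul_le_mul_of_nonneg_left hE0le hVt₀nn
    rw [mul_one] at hmul
    exact comp1.trans (add_le_add_left hmul _)
  have hEeq : Real.exp (-K*(t - mid)) = Real.exp (-(K/2)*(t - t₀)) := by
    rw [hmid]; congr 1; ring
  have hchain : V t ≤ (V t₀ + ccoef*(W₀^2+W₀^4)/K) * Real.exp (-(K/2)*(t - t₀))
      + ccoef*(W₁^2+W₁^4)/K := by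
    rw [hEeq] at comp2
    have hEnn : 0 ≤ Real.exp (-(K/2)*(t - t₀)) := Real.exp_nonneg _
    have hstep := mul_le_mul_of_nonneg_right hVmid hEnn
    exact comp2.trans (add_le_add_left hstep _)
  set E4 : ℝ := Real.exp (-(K/4)*(t - t₀)) with hE4
  have hE4nn : 0 ≤ E4 := hE4 ▸ Real.exp_nonneg _
  have hsqrtE : Real.sqrt (Real.exp (-(K/2)*(t - t₀))) = E4 := by
    rw [sqrt_exp_eq, hE4]; congr 1; ring
  have hQnn1 : 0 ≤ V t₀ + ccoef*(W₀^2+W₀^4)/K :=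
    add_nonneg hVt₀nn (div_nonneg heps₀ hKpos.le)
  have hsq1 : Real.sqrt (V t) ≤ Real.sqrt (V t₀ + ccoef*(W₀^2+W₀^4)/K) * E4
      + Real.sqrt (ccoef*(W₁^2+W₁^4)/K) := by
    have step := (Real.sqrt_le_sqrt hchain).trans
      (sqrt_add_le' (mul_nonneg hQnn1 (Real.exp_nonneg _)) (div_nonneg heps₁ hKpos.le))
    rw [Real.sqrt_mul hQnn1, hsqrtE] at step
    exact step
  have hsq2 : Real.sqrt (V t₀ + ccoef*(W₀^2+W₀^4)/K)
      ≤ Real.sqrt (V t₀) + Real.sqrt (ccoef*(W₀^2+W₀^4)/K) :=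
    sqrt_add_le' hVt₀nn (div_nonneg heps₀ hKpos.le)
  have hVt₀le : Real.sqrt (V t₀) ≤ max d 1 * R := by
    have hmax : 0 ≤ max d 1 := le_max_of_le_right zero_le_one
    have hle : V t₀ ≤ (max d 1 * R)^2 := by
      have hR2 : R^2 = (xb t₀)^2+(vb t₀)^2+(z t₀)^2+(ψ t₀)^2+(u t₀)^2+(r t₀)^2 := by
        rw [hRdef]; unfold norm6; rw [Real.sq_sqrt (by positivity)]
      have hxv2 : (xb t₀)^2 + (vb t₀)^2 ≤ R^2 := by
        linarith only [hR2, sq_nonneg (z t₀), sq_nonneg (ψ t₀), sq_nonneg (u t₀),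
          sq_nonneg (r t₀)]
      rw [hVdef]
      exact max_sq_bound hd hxv2
    calc Real.sqrt (V t₀) ≤ Real.sqrt ((max d 1 * R)^2) := Real.sqrt_le_sqrt hle
    _ = max d 1 * R := Real.sqrt_sq (mul_nonneg hmax hR0)
  have hepsb : ∀ W : ℝ, 0 ≤ W → Real.sqrt (ccoef*(W^2+W^4)/K) ≤ S*(W + W^2) := by
    intro W hW
    rw [show ccoef*(W^2+W^4)/K = (ccoef/K)*(W^2+W^4) by ring,
      Real.sqrt_mul (div_nonneg hccoef.le hKpos.le), ← hSdef]
    have h2 : Real.sqrt (W^2+W^4) ≤ W + W^2 := by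
      have h3 := sqrt_add_le' (sq_nonneg W) (by positivity : (0:ℝ) ≤ W^4)
      have e1 : Real.sqrt (W^2) = W := Real.sqrt_sq hW
      have e2 : Real.sqrt (W^4) = W^2 := by
        rw [show W^4 = (W^2)^2 by ring]; exact Real.sqrt_sq (sq_nonneg W)
      rw [e1, e2] at h3
      exact h3
    exact mul_le_mul_of_nonneg_left h2 (hSdef ▸ Real.sqrt_nonneg _)
  have hsplit := norm6_split (xb t) (vb t) (z t) (ψ t) (u t) (r t)
  have hfin2 := hw t ht
  have hfin3 : m * Real.sqrt ((xb t)^2 + (vb t)^2) ≤ Real.sqrt (V t) := by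
    rw [show m * Real.sqrt ((xb t)^2+(vb t)^2) = Real.sqrt (m^2*((xb t)^2+(vb t)^2)) by
      rw [Real.sqrt_mul (sq_nonneg m), Real.sqrt_sq hm.le]]
    apply Real.sqrt_le_sqrt
    rw [hVdef, hmdef]
    exact min_sq_bound hd
  have hQ : Real.sqrt (V t) ≤ (max d 1 * R + S*(W₀+W₀^2)) * E4 + S*(W₁+W₁^2) := by
    have e5 := hepsb W₀ hW₀nn
    have e6 := hepsb W₁ hW₁nn
    have e7 : Real.sqrt (V t₀ + ccoef*(W₀^2+W₀^4)/K) ≤ max d 1 * R + S*(W₀+W₀^2) :=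
      hsq2.trans (add_le_add hVt₀le e5)
    have hstep := mul_le_mul_of_nonneg_right e7 hE4nn
    exact hsq1.trans (add_le_add hstep e6)
  have hxv : Real.sqrt ((xb t)^2+(vb t)^2)
      ≤ ((max d 1 * R + S*(W₀+W₀^2)) * E4 + S*(W₁+W₁^2))/m := by
    rw [le_div_iff₀ hm]
    calc Real.sqrt ((xb t)^2+(vb t)^2) * m = m * Real.sqrt ((xb t)^2+(vb t)^2) := by ring
    _ ≤ Real.sqrt (V t) := hfin3
    _ ≤ _ := hQ
  have hring : ((max d 1 * R + S*(W₀+W₀^2)) * E4 + S*(W₁+W₁^2))/m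
      = (A*R + B*(W₀+W₀^2))*E4 + B*(W₁+W₁^2) := by
    rw [hAdef, hBdef]; field_simp
  rw [hring] at hxv
  calc norm6 (xb t) (vb t) (z t) (ψ t) (u t) (r t)
      ≤ Real.sqrt ((xb t)^2 + (vb t)^2) + norm4 (z t) (ψ t) (u t) (r t) := hsplit
    _ ≤ ((A*R + B*(W₀+W₀^2))*E4 + B*(W₁+W₁^2)) + χ₁ R (t - t₀) := add_le_add hxv hfin2
    _ = χ₁ R (t - t₀) + (A*R + B*(W₀+W₀^2))*E4 + B*(W₁+W₁^2) := by ring
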